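/- arXiv:1202.6642 — 7 statements merged into one kernel-verified Lean document; each statement's English description precedes it below -/
import Mathlib

section
/- For any connected finite graph G = (V,E), the sum over all vertex covers V₁ ⊆ V (i.e., subsets V₁ such that the induced subgraph on V \ V₁ has no edges) of 2 raised to the number of connected components of the induced subgraph G[V₁] is at most 3 · 2^{|V|−1}. -/
open Classical

namespace Stmt0Aux

/-- valid color pair across an edge: not both `2`, not `{0,1}`. -/
def P (c d : Fin 3) : Prop := ¬(c = 2 ∧ d = 2) ∧ ¬(c = 0 ∧ d = 1) ∧ ¬(c = 1 ∧ d = 0)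

instance (c d : Fin 3) : Decidable (P c d) := by unfold P; infer_instance

def Valid {V : Type*} (G : SimpleGraph V) (f : V → Fin 3) : Prop :=
  ∀ u v, G.Adj u v → P (f u) (f v)

def allowed (c : Fin 3) (b : Bool) : Fin 3 :=
  if c = 2 then (if b then 1 else 0) else (if b then 2 else c)

def bitOf (c d : Fin 3) : Bool :=
  if c = 2 then decide (d = 1) else decide (d = 2)

lemma allowed_bitOf : ∀ c d : Fin 3, P c d → allowed c (bitOf c d) = d := by decide

lemma P_cases : ∀ c d : Fin 3, (c ≠ 2 ∨ d ≠ 2) → ¬(c = 0 ∧ d = 1) → ¬(c = 1 ∧ d = 0) →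
    P c d := by decide

lemma fin3_eq_one : ∀ c : Fin 3, c ≠ 0 → c ≠ 2 → c = 1 := by decide

lemma P_same_side : ∀ c d : Fin 3, P c d → c ≠ 2 → d ≠ 2 → c = d := by decide

lemma walk_const {V' : Type*} {H : SimpleGraph V'} {β : Sort*} (g : V' → β)
    (h : ∀ u v, H.Adj u v → g u = g v) : ∀ {u v : V'} (_ : H.Walk u v), g u = g v := by
  intro u v p
  induction p with
  | nil => rfl
  | cons h' p ih => exact (h _ _ h').trans ih

lemma exists_parent {V : Type*} {G : SimpleGraph V} (hG : G.Connected) (v₀ v : V)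
    (hv : v ≠ v₀) : ∃ u, G.Adj u v ∧ G.dist v₀ u < G.dist v₀ v := by
  have hne : G.dist v v₀ ≠ 0 := fun h => hv (hG.dist_eq_zero_iff.mp h)
  obtain ⟨p, hp⟩ := SimpleGraph.exists_walk_of_dist_ne_zero hne
  cases p with
  | nil => exact absurd rfl hv
  | @cons _ u _ h q =>
    refine ⟨u, h.symm, ?_⟩
    have h1 : G.dist v₀ u ≤ q.length := by
      rw [SimpleGraph.dist_comm]; exact SimpleGraph.dist_le q
    have h2 : G.dist v₀ v = q.length + 1 := by
      rw [SimpleGraph.dist_comm, ← hp, SimpleGraph.Walk.length_cons]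
    omega

end Stmt0Aux

open Stmt0Aux

/-- Lemma 3 (combinatorial bound): for any connected finite graph `G`, the sum over
all vertex covers `V₁` of `2 ^ (number of connected components of G[V₁])` is at most
`3 · 2 ^ (|V| - 1)`. -/
theorem stmt0 {V : Type*} [Fintype V] (G : SimpleGraph V) (hG : G.Connected) :
    ∑ V₁ ∈ Finset.univ.filter
        (fun V₁ : Finset V => ∀ u v : V, G.Adj u v → u ∈ V₁ ∨ v ∈ V₁),
      2 ^ Nat.card (G.induce (↑V₁ : Set V)).ConnectedComponent
      ≤ 3 * 2 ^ (Fintype.card V - 1) := by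
  classical
  set covers := Finset.univ.filter
      (fun V₁ : Finset V => ∀ u v : V, G.Adj u v → u ∈ V₁ ∨ v ∈ V₁) with hcovers
  set valid := Finset.univ.filter (fun f : V → Fin 3 => Valid G f) with hvalid
  have hvalid_mem : ∀ f : V → Fin 3, f ∈ valid ↔ Valid G f := by
    intro f; rw [hvalid, Finset.mem_filter]; simp
  -- Step A: the sum equals the number of valid colorings
  have hmaps : ∀ f ∈ valid, (Finset.univ.filter fun v => f v ≠ 2) ∈ covers := by
    intro f hf
    rw [hvalid_mem] at hf
    rw [hcovers, Finset.mem_filter]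
    refine ⟨Finset.mem_univ _, fun u v huv => ?_⟩
    have := (hf u v huv).1
    simp only [Finset.mem_filter, Finset.mem_univ, true_and]
    tauto
  have stepA : ∑ V₁ ∈ covers,
      2 ^ Nat.card (G.induce (↑V₁ : Set V)).ConnectedComponent = valid.card := by
    rw [Finset.card_eq_sum_card_fiberwise hmaps]
    refine Finset.sum_congr rfl fun V₁ hV₁ => ?_
    rw [hcovers, Finset.mem_filter] at hV₁
    have hcov := hV₁.2
    set fiber := valid.filter (fun f => (Finset.univ.filter fun v => f v ≠ 2) = V₁)
      with hfiber
    have hfib_mem : ∀ f : V → Fin 3, f ∈ fiber ↔ Valid G f ∧ ∀ v, (f v ≠ 2 ↔ v ∈ V₁) := by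
      intro f
      rw [hfiber, Finset.mem_filter, hvalid_mem, Finset.ext_iff]
      simp [and_comm]
    have compat : ∀ f : V → Fin 3, f ∈ fiber →
        ∀ (u v : (↑V₁ : Set V)) (p : (G.induce (↑V₁ : Set V)).Walk u v), p.IsPath →
          (fun x : (↑V₁ : Set V) => decide (f x.1 = 0)) u
            = (fun x : (↑V₁ : Set V) => decide (f x.1 = 0)) v := by
      intro f hf u v p _
      show decide (f u.1 = 0) = decide (f v.1 = 0)
      refine walk_const (fun x : (↑V₁ : Set V) => decide (f x.1 = 0)) (fun a b hab => ?_) p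
      have hf' := (hfib_mem f).mp hf
      have hP : P (f a.1) (f b.1) := hf'.1 a.1 b.1 hab
      have ha2 : f a.1 ≠ 2 := (hf'.2 a.1).mpr (Finset.mem_coe.mp a.2)
      have hb2 : f b.1 ≠ 2 := (hf'.2 b.1).mpr (Finset.mem_coe.mp b.2)
      show decide (f a.1 = 0) = decide (f b.1 = 0)
      rw [P_same_side _ _ hP ha2 hb2]
    have key : (Finset.univ :
        Finset ((G.induce (↑V₁ : Set V)).ConnectedComponent → Bool)).card = fiber.card := by
      refine Finset.card_bij'
        (fun (b : (G.induce (↑V₁ : Set V)).ConnectedComponent → Bool)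
            (_ : b ∈ Finset.univ) => (fun v : V =>
          if h : v ∈ V₁ then
            (if b ((G.induce (↑V₁ : Set V)).connectedComponentMk ⟨v, Finset.mem_coe.mpr h⟩)
              then (0 : Fin 3) else 1) else 2))
        (fun (f : V → Fin 3) (hf : f ∈ fiber) =>
          SimpleGraph.ConnectedComponent.lift (fun x : (↑V₁ : Set V) => decide (f x.1 = 0))
            (compat f hf))
        ?_ ?_ ?_ ?_
      · -- i maps into fiber
        intro b _
        rw [hfib_mem]
        constructor
        · intro u v huv
          by_cases hu : u ∈ V₁ <;> by_cases hv : v ∈ V₁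
          · have hadj : (G.induce (↑V₁ : Set V)).Adj ⟨u, Finset.mem_coe.mpr hu⟩
                ⟨v, Finset.mem_coe.mpr hv⟩ := huv
            have hcomp := SimpleGraph.ConnectedComponent.connectedComponentMk_eq_of_adj hadj
            simp only [dif_pos hu, dif_pos hv, hcomp]
            cases b ((G.induce (↑V₁ : Set V)).connectedComponentMk
                ⟨v, Finset.mem_coe.mpr hv⟩) <;> decide
          · simp only [dif_pos hu, dif_neg hv]
            cases b ((G.induce (↑V₁ : Set V)).connectedComponentMk
                ⟨u, Finset.mem_coe.mpr hu⟩) <;> decide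
          · simp only [dif_neg hu, dif_pos hv]
            cases b ((G.induce (↑V₁ : Set V)).connectedComponentMk
                ⟨v, Finset.mem_coe.mpr hv⟩) <;> decide
          · exact absurd (hcov u v huv) (by tauto)
        · intro v
          by_cases hv : v ∈ V₁
          · simp only [dif_pos hv]
            constructor
            · intro _; exact hv
            · intro _
              cases b ((G.induce (↑V₁ : Set V)).connectedComponentMk
                  ⟨v, Finset.mem_coe.mpr hv⟩) <;> decide
          · simp only [dif_neg hv]; simp [hv]
      · -- j maps into univ
        intro f hf; exact Finset.mem_univ _
      · -- left inverse
        intro b hb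
        funext c
        refine SimpleGraph.ConnectedComponent.ind (fun w => ?_) c
        obtain ⟨v, hv⟩ := w
        have hv' : v ∈ V₁ := Finset.mem_coe.mp hv
        simp only [SimpleGraph.ConnectedComponent.lift_mk, dif_pos hv']
        have hsub : (⟨v, Finset.mem_coe.mpr hv'⟩ : (↑V₁ : Set V)) = ⟨v, hv⟩ := rfl
        rw [hsub]
        cases b ((G.induce (↑V₁ : Set V)).connectedComponentMk ⟨v, hv⟩) <;> simp
      · -- right inverse
        intro f hf
        have hf' := (hfib_mem f).mp hf
        funext v
        by_cases hv : v ∈ V₁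
        · simp only [dif_pos hv, SimpleGraph.ConnectedComponent.lift_mk]
          have h2 : f v ≠ 2 := (hf'.2 v).mpr hv
          by_cases h0 : f v = 0
          · simp [h0]
          · have h1 : f v = 1 := fin3_eq_one _ h0 h2
            simp [h0, h1]
        · simp only [dif_neg hv]
          have : ¬ f v ≠ 2 := fun h => hv ((hf'.2 v).mp h)
          exact (not_not.mp this).symm
    rw [← key, Finset.card_univ, Fintype.card_fun, Fintype.card_bool]
    congr 1
    exact Nat.card_eq_fintype_card
  rw [stepA]
  -- Step B: the number of valid colorings is at most 3 * 2 ^ (n - 1)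
  have hne : Nonempty V := hG.nonempty
  obtain ⟨v₀⟩ := hne
  choose par hpar using fun (v : V) (hv : v ≠ v₀) => exists_parent hG v₀ v hv
  set F : (V → Fin 3) → Fin 3 × ({v : V // v ≠ v₀} → Bool) :=
    fun f => (f v₀, fun v => bitOf (f (par v.1 v.2)) (f v.1)) with hF
  have hinj : Set.InjOn F valid := by
    intro f hf f' hf' hFe
    rw [Finset.mem_coe, hvalid_mem] at hf hf'
    have h0 : f v₀ = f' v₀ := congrArg Prod.fst hFe
    have hb : ∀ v : {v : V // v ≠ v₀}, bitOf (f (par v.1 v.2)) (f v.1)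
        = bitOf (f' (par v.1 v.2)) (f' v.1) := fun v =>
      congrFun (congrArg Prod.snd hFe) v
    have key : ∀ n, ∀ v, G.dist v₀ v ≤ n → f v = f' v := by
      intro n
      induction n with
      | zero =>
        intro v hv
        have hveq : v₀ = v := hG.dist_eq_zero_iff.mp (Nat.le_zero.mp hv)
        subst hveq; exact h0
      | succ n ih =>
        intro v hv
        by_cases hveq : v = v₀
        · subst hveq; exact h0
        · have hlt := (hpar v hveq).2
          have hadj := (hpar v hveq).1
          have hu : f (par v hveq) = f' (par v hveq) := ih _ (by omega)
          have hP : P (f (par v hveq)) (f v) := hf _ _ hadj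
          have hP' : P (f' (par v hveq)) (f' v) := hf' _ _ hadj
          have hbv := hb ⟨v, hveq⟩
          calc f v = allowed (f (par v hveq)) (bitOf (f (par v hveq)) (f v)) :=
                (allowed_bitOf _ _ hP).symm
            _ = allowed (f' (par v hveq)) (bitOf (f' (par v hveq)) (f' v)) := by
                rw [hu] at hbv ⊢; rw [hbv]
            _ = f' v := allowed_bitOf _ _ hP'
    funext v
    exact key (G.dist v₀ v) v le_rfl
  calc valid.card
      ≤ (Finset.univ : Finset (Fin 3 × ({v : V // v ≠ v₀} → Bool))).card :=
        Finset.card_le_card_of_injOn F (fun _ _ => Finset.mem_univ _) hinj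
    _ = 3 * 2 ^ (Fintype.card V - 1) := by
        rw [Finset.card_univ, Fintype.card_prod, Fintype.card_fun, Fintype.card_bool,
          Fintype.card_fin]
        congr 1
        have : Fintype.card {v : V // v ≠ v₀} = Fintype.card V - 1 := by
          simp [Fintype.card_subtype_compl]
        rw [this]
end

section
/- For any connected finite graph G, the number of pairs (V₁, C) where V₁ is a vertex cover of G and C is an arbitrary subset of the set of connected components of the induced subgraph G[V₁], is at most 3 · 2^{|V(G)|−1}. -/
namespace Stmt1Aux

/-- Compatibility relation on colors: not both 0, and if both nonzero then equal. -/
def Hadj (a b : Fin 3) : Prop := (a ≠ 0 ∨ b ≠ 0) ∧ (a = 0 ∨ b = 0 ∨ a = b)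

def code (a b : Fin 3) : Bool := if a = 0 then decide (b = 2) else decide (b ≠ 0)

def decode (a : Fin 3) (t : Bool) : Fin 3 :=
  if a = 0 then (if t then 2 else 1) else (if t then a else 0)

lemma decode_code : ∀ a b : Fin 3, Hadj a b → decode a (code a b) = b := by
  unfold Hadj code decode; decide

end Stmt1Aux

open Stmt1Aux in
/-- For any connected finite graph `G`, the number of pairs `(V₁, C)` where `V₁` is a
vertex cover of `G` and `C` is a subset of the connected components of `G[V₁]` is at
most `3 · 2 ^ (|V| - 1)`. -/
theorem stmt1 {V : Type*} [Fintype V] (G : SimpleGraph V) (hG : G.Connected) :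
    Nat.card (Σ V₁ : {S : Set V // ∀ u v : V, G.Adj u v → u ∈ S ∨ v ∈ S},
        Set (G.induce (V₁ : Set V)).ConnectedComponent)
      ≤ 3 * 2 ^ (Fintype.card V - 1) := by
  classical
  obtain ⟨r⟩ := hG.nonempty
  -- parent function
  have hpar : ∀ v : V, v ≠ r → ∃ u, G.Adj u v ∧ G.dist r u < G.dist r v := by
    intro v h
    obtain ⟨w, hw⟩ := hG.exists_walk_length_eq_dist v r
    cases w with
    | nil => exact absurd rfl h
    | cons hadj tail =>
        rename_i u
        refine ⟨u, hadj.symm, ?_⟩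
        have h1 : G.dist r u ≤ tail.length := by
          rw [SimpleGraph.dist_comm]; exact SimpleGraph.dist_le tail
        have h2 : G.dist r v = tail.length + 1 := by
          rw [SimpleGraph.dist_comm, ← hw]; simp [SimpleGraph.Walk.length_cons]
        omega
  choose p hpadj hplt using hpar
  set X := (Σ V₁ : {S : Set V // ∀ u v : V, G.Adj u v → u ∈ S ∨ v ∈ S},
        Set (G.induce (V₁ : Set V)).ConnectedComponent) with hX
  -- coloring
  set F : X → V → Fin 3 := fun x v =>
    if h : v ∈ (x.1 : Set V) then
      (if (G.induce (x.1 : Set V)).connectedComponentMk ⟨v, h⟩ ∈ x.2 then 2 else 1)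
    else 0 with hF
  -- values and membership
  have hmem : ∀ (x : X) (v : V), F x v ≠ 0 ↔ v ∈ (x.1 : Set V) := by
    intro x v
    by_cases h : v ∈ (x.1 : Set V)
    · simp only [hF, dif_pos h]
      constructor
      · intro _; exact h
      · intro _; split <;> decide
    · simp [hF, dif_neg h, h]
  have hval2 : ∀ (x : X) (v : V) (h : v ∈ (x.1 : Set V)),
      F x v = 2 ↔ (G.induce (x.1 : Set V)).connectedComponentMk ⟨v, h⟩ ∈ x.2 := by
    intro x v h
    simp only [hF, dif_pos h]
    split <;> rename_i hc
    · simpa using hc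
    · simp only [hc, iff_false]; decide
  -- the key edge compatibility
  have hedge : ∀ (x : X) (u v : V), G.Adj u v → Hadj (F x u) (F x v) := by
    intro x u v huv
    by_cases hu : u ∈ (x.1 : Set V) <;> by_cases hv : v ∈ (x.1 : Set V)
    · have hcomp : (G.induce (x.1 : Set V)).connectedComponentMk ⟨u, hu⟩ =
          (G.induce (x.1 : Set V)).connectedComponentMk ⟨v, hv⟩ := by
        apply SimpleGraph.ConnectedComponent.sound
        exact SimpleGraph.Adj.reachable (by simpa using huv)
      have : F x u = F x v := by
        simp only [hF, dif_pos hu, dif_pos hv, hcomp]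
      constructor
      · left; rw [hmem]; exact hu
      · right; right; exact this
    · exact ⟨Or.inl ((hmem x u).2 hu), Or.inr (Or.inl (by
        simp only [hF, dif_neg hv]))⟩
    · exact ⟨Or.inr ((hmem x v).2 hv), Or.inl (by
        simp only [hF, dif_neg hu])⟩
    · rcases x.1.2 u v huv with h | h
      · exact absurd h hu
      · exact absurd h hv
  -- F is injective
  have hFinj : Function.Injective F := by
    intro x y hxy
    obtain ⟨⟨S, hS⟩, C⟩ := x
    obtain ⟨⟨S', hS'⟩, C'⟩ := y
    have hSeq : S = S' := by
      ext v
      rw [← hmem ⟨⟨S, hS⟩, C⟩ v, ← hmem ⟨⟨S', hS'⟩, C'⟩ v, hxy]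
    subst hSeq
    have hCeq : C = C' := by
      ext c
      induction c using SimpleGraph.ConnectedComponent.ind with
      | _ w =>
        obtain ⟨v, hv⟩ := w
        rw [← hval2 ⟨⟨S, hS⟩, C⟩ v hv, ← hval2 ⟨⟨S, hS⟩, C'⟩ v hv, hxy]
    subst hCeq
    rfl
  -- the encoding
  set Enc : X → Fin 3 × ({v : V // v ≠ r} → Bool) := fun x =>
    (F x r, fun v => code (F x (p v.1 v.2)) (F x v.1)) with hEnc
  have hEncInj : Function.Injective Enc := by
    intro x y hxy
    apply hFinj
    have h1 : F x r = F y r := congrArg Prod.fst hxy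
    have h2 : ∀ v : {v : V // v ≠ r},
        code (F x (p v.1 v.2)) (F x v.1) = code (F y (p v.1 v.2)) (F y v.1) :=
      fun v => congrFun (congrArg Prod.snd hxy) v
    have key : ∀ n v, G.dist r v ≤ n → F x v = F y v := by
      intro n
      induction n with
      | zero =>
        intro v hd
        by_cases hv : v = r
        · subst hv; exact h1
        · exact absurd (hplt v hv) (by omega)
      | succ n ih =>
        intro v hd
        by_cases hv : v = r
        · subst hv; exact h1
        have hu : F x (p v hv) = F y (p v hv) :=
          ih (p v hv) (by have := hplt v hv; omega)
        have ha : Hadj (F x (p v hv)) (F x v) := hedge x _ _ (hpadj v hv)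
        have hb : Hadj (F y (p v hv)) (F y v) := hedge y _ _ (hpadj v hv)
        calc F x v = decode (F x (p v hv)) (code (F x (p v hv)) (F x v)) :=
              (decode_code _ _ ha).symm
          _ = decode (F y (p v hv)) (code (F y (p v hv)) (F y v)) := by
              rw [h2 ⟨v, hv⟩, hu]
          _ = F y v := decode_code _ _ hb
    funext v
    exact key (G.dist r v) v le_rfl
  -- cardinality count
  have := Nat.card_le_card_of_injective Enc hEncInj
  refine this.trans ?_
  have hcard : Nat.card (Fin 3 × ({v : V // v ≠ r} → Bool))
      = 3 * 2 ^ (Fintype.card V - 1) := by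
    rw [Nat.card_eq_fintype_card]
    rw [Fintype.card_prod, Fintype.card_fin, Fintype.card_fun, Fintype.card_bool]
    congr 1
    rw [Fintype.card_subtype_compl]
    simp
  exact hcard.le
end

section
/- Let G be a connected finite graph and T a depth-first search spanning tree of G rooted at some vertex r. Then the set X of internal (non-leaf) nodes of T is a vertex cover of G, and the induced subgraph G[X] is connected (when |V(G)| ≥ 2). -/
/-- Let `G` be a connected finite graph with at least two vertices and let `p, r`
describe a DFS spanning tree of `G`: `p` is the parent function, `r` the root (with
`p r = r`), every non-root vertex is adjacent to its parent, every vertex reaches the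
root along parent pointers, and every edge of `G` joins an ancestor–descendant pair.
Then the set `X` of internal nodes of the tree is a vertex cover of `G`, and `G[X]` is
connected. -/
theorem stmt8 {V : Type*} [Fintype V] (G : SimpleGraph V) (hG : G.Connected)
    (hcard : 2 ≤ Fintype.card V)
    (p : V → V) (r : V) (hr : p r = r)
    (htree : ∀ w : V, w ≠ r → G.Adj w (p w))
    (hreach : ∀ w : V, Relation.ReflTransGen (fun a b => b = p a) w r)
    (hdfs : ∀ a b : V, G.Adj a b →
      Relation.ReflTransGen (fun x y => y = p x) a b ∨
      Relation.ReflTransGen (fun x y => y = p x) b a) :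
    (∀ a b : V, G.Adj a b →
        a ∈ {x : V | ∃ w : V, w ≠ x ∧ p w = x} ∨
        b ∈ {x : V | ∃ w : V, w ≠ x ∧ p w = x}) ∧
    (G.induce {x : V | ∃ w : V, w ≠ x ∧ p w = x}).Connected := by
  set X : Set V := {x : V | ∃ w : V, w ≠ x ∧ p w = x} with hXdef
  -- fixed points of p equal r
  have hfix : ∀ x : V, p x = x → x = r := by
    intro x hpx
    have key : ∀ y : V, Relation.ReflTransGen (fun a b => b = p a) x y → y = x := by
      intro y hy
      induction hy with
      | refl => rfl
      | tail _ h ih => subst h; rw [ih, hpx]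
    exact (key r (hreach x)).symm
  -- last step of a nontrivial chain gives a child of the endpoint
  have hlast : ∀ a b : V, Relation.ReflTransGen (fun x y => y = p x) a b → a ≠ b →
      b ∈ X := by
    intro a b hab
    induction hab with
    | refl => intro h; exact absurd rfl h
    | @tail y z hchain hstep ih =>
      intro hne
      by_cases hyz : y = z
      · subst hyz; exact ih hne
      · exact ⟨y, hyz, hstep.symm⟩
  -- the root is internal
  have hrX : r ∈ X := by
    obtain ⟨w, hw⟩ := Fintype.exists_ne_of_one_lt_card (by omega) r
    exact hlast w r (hreach w) hw
  -- vertex cover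
  have hcover : ∀ a b : V, G.Adj a b → a ∈ X ∨ b ∈ X := by
    intro a b hab
    rcases hdfs a b hab with h | h
    · exact Or.inr (hlast a b h hab.ne)
    · exact Or.inl (hlast b a h hab.ne')
  refine ⟨hcover, ?_⟩
  -- every internal node reaches the root within G[X]
  have hreachX : ∀ x : V, ∀ hx : x ∈ X,
      (G.induce X).Reachable ⟨x, hx⟩ ⟨r, hrX⟩ := by
    intro x
    have hx := hreach x
    induction hx using Relation.ReflTransGen.head_induction_on with
    | refl => intro _; rfl
    | @head a c hstep htail ih =>
      intro ha
      by_cases har : a = r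
      · subst har; rfl
      · have hpa : p a ∈ X := ⟨a, fun h => har (hfix a h.symm), rfl⟩
        have hc : c ∈ X := hstep ▸ hpa
        have hadj : (G.induce X).Adj ⟨a, ha⟩ ⟨c, hc⟩ := by
          have : G.Adj a c := hstep ▸ htree a har
          simpa using this
        exact (hadj.reachable).trans (ih hc)
  rw [SimpleGraph.connected_iff]
  exact ⟨fun ⟨x, hx⟩ ⟨y, hy⟩ => (hreachX x hx).trans (hreachX y hy).symm, ⟨⟨r, hrX⟩⟩⟩
end

section
/- Let G be a connected finite graph and T a depth-first search spanning tree of G. Then the set of internal nodes of T is a connected vertex cover of G whose cardinality is at most twice the cardinality of any vertex cover of G; in particular at most twice the minimum connected vertex cover. -/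
/-- Guha–Khuller `2`-approximation: the set of internal nodes of a DFS spanning tree of
a connected graph `G` (with at least two vertices) is a connected vertex cover of `G`
of cardinality at most twice the cardinality of any vertex cover of `G`. -/
theorem stmt10 {V : Type*} [Fintype V] (G : SimpleGraph V) (hG : G.Connected)
    (hcard : 2 ≤ Fintype.card V)
    (p : V → V) (r : V) (hr : p r = r)
    (htree : ∀ w : V, w ≠ r → G.Adj w (p w))
    (hreach : ∀ w : V, Relation.ReflTransGen (fun a b => b = p a) w r)
    (hdfs : ∀ a b : V, G.Adj a b →
      Relation.ReflTransGen (fun x y => y = p x) a b ∨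
      Relation.ReflTransGen (fun x y => y = p x) b a) :
    (∀ a b : V, G.Adj a b →
        a ∈ {x : V | ∃ w : V, w ≠ x ∧ p w = x} ∨
        b ∈ {x : V | ∃ w : V, w ≠ x ∧ p w = x}) ∧
    (G.induce {x : V | ∃ w : V, w ≠ x ∧ p w = x}).Connected ∧
    (∀ C : Set V, (∀ a b : V, G.Adj a b → a ∈ C ∨ b ∈ C) →
      ({x : V | ∃ w : V, w ≠ x ∧ p w = x}).ncard ≤ 2 * C.ncard) := by
  classical
  set I : Set V := {x : V | ∃ w : V, w ≠ x ∧ p w = x} with hIdef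
  -- fixed points of p are exactly r
  have hfix : ∀ w : V, p w = w → w = r := by
    intro w hw
    by_contra h
    exact G.loopless.irrefl w (by simpa [hw] using htree w h)
  -- if b is a (strict) ancestor of a then b is internal
  have hanc : ∀ a b : V, Relation.ReflTransGen (fun x y => y = p x) a b → a ≠ b → b ∈ I := by
    intro a b h
    induction h with
    | refl => intro h; exact absurd rfl h
    | @tail c d h1 h2 ih =>
      intro had
      by_cases hcd : c = d
      · exact hcd ▸ ih (fun h => had (h.trans hcd))
      · exact ⟨c, hcd, h2.symm⟩
  -- part 1: vertex cover
  have hcov : ∀ a b : V, G.Adj a b → a ∈ I ∨ b ∈ I := by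
    intro a b hab
    rcases hdfs a b hab with h | h
    · exact Or.inr (hanc a b h hab.ne)
    · exact Or.inl (hanc b a h hab.ne')
  -- r is internal
  have hrI : r ∈ I := by
    obtain ⟨w, hw⟩ := Fintype.exists_ne_of_one_lt_card hcard r
    exact hanc w r (hreach w) hw
  -- climbing: every internal vertex reaches r in the induced graph
  have hclimb : ∀ x : V, ∀ hx : x ∈ I,
      (G.induce I).Reachable ⟨x, hx⟩ ⟨r, hrI⟩ := by
    intro x hx
    induction hreach x using Relation.ReflTransGen.head_induction_on with
    | refl => exact SimpleGraph.Reachable.refl _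
    | @head a c h1 h2 ih =>
      by_cases har : a = r
      · subst har; exact SimpleGraph.Reachable.refl _
      · have hc : c = p a := h1
        have hac : a ≠ c := fun h => har (hfix a (hc ▸ h.symm))
        have hcI : c ∈ I := ⟨a, hac, hc.symm⟩
        have hadj : (G.induce I).Adj ⟨a, hx⟩ ⟨c, hcI⟩ := by
          simpa [hc] using htree a har
        exact hadj.reachable.trans (ih hcI)
  refine ⟨hcov, ?_, ?_⟩
  · rw [SimpleGraph.connected_iff]
    constructor
    · intro x y
      exact (hclimb x.1 x.2).trans (hclimb y.1 y.2).symm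
    · exact ⟨⟨r, hrI⟩⟩
  · -- cardinality bound
    intro C hC
    -- pick, for each internal x, an element of C in {x, p⁻¹(x)-children}
    have hpick : ∀ x ∈ I, ∃ c ∈ C, c = x ∨ p c = x := by
      intro x hx
      by_cases hxC : x ∈ C
      · exact ⟨x, hxC, Or.inl rfl⟩
      · obtain ⟨w, hwx, hpw⟩ := hx
        have hwr : w ≠ r := fun h => hwx (by rw [h] at hpw ⊢; rw [← hpw, hr])
        have hadj : G.Adj w x := hpw ▸ htree w hwr
        rcases hC w x hadj with hw | hxc
        · exact ⟨w, hw, Or.inr hpw⟩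
        · exact absurd hxc hxC
    set f : V → V := fun x => if h : ∃ c ∈ C, c = x ∨ p c = x then h.choose else x with hf
    have hfC : ∀ x ∈ I, f x ∈ C := by
      intro x hx
      have h := hpick x hx
      simp only [hf, dif_pos h]
      exact h.choose_spec.1
    have hfiber : ∀ x ∈ I, x = f x ∨ x = p (f x) := by
      intro x hx
      have h := hpick x hx
      simp only [hf, dif_pos h]
      rcases h.choose_spec.2 with h' | h'
      · exact Or.inl h'.symm
      · exact Or.inr h'.symm
    -- now count via Finsets
    rw [Set.ncard_eq_toFinset_card' I, Set.ncard_eq_toFinset_card' C]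
    calc I.toFinset.card ≤ 2 * (I.toFinset.image f).card := by
          apply Finset.card_le_mul_card_image
          intro b _
          have hsub : (I.toFinset.filter fun a => f a = b) ⊆ {b, p b} := by
            intro x hx
            simp only [Finset.mem_filter, Set.mem_toFinset] at hx
            rcases hfiber x hx.1 with h | h <;>
              simp [Finset.mem_insert, hx.2 ▸ h]
          calc (I.toFinset.filter fun a => f a = b).card ≤ ({b, p b} : Finset V).card :=
                Finset.card_le_card hsub
            _ ≤ 2 := Finset.card_insert_le _ _ |>.trans (by simp)
      _ ≤ 2 * C.toFinset.card := by
          apply Nat.mul_le_mul_left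
          apply Finset.card_le_card
          intro c hc
          simp only [Finset.mem_image, Set.mem_toFinset] at hc ⊢
          obtain ⟨x, hx, hfx⟩ := hc
          exact hfx ▸ hfC x hx
end

section
/- Let G be a graph, Z a vertex cover of G, Z₁ ⊆ Z with Z \ Z₁ independent, and V₁ the set of vertices in V(G) \ Z having a neighbor in Z \ Z₁. If additionally every vertex of V₁ has a neighbor in Z₁, then Z₁ ∪ V₁ is a vertex cover of G. -/
/-- If `Z` is a vertex cover of `G`, `Z₁ ⊆ Z` with `Z₀ = Z \ Z₁` independent, `V₁` is
the set of vertices outside `Z` having a neighbour in `Z₀`, and every vertex of `V₁`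
has a neighbour in `Z₁`, then `Z₁ ∪ V₁` is a vertex cover of `G`. -/
theorem stmt15 {V : Type*} (G : SimpleGraph V) (Z Z₁ : Set V) (hZ₁ : Z₁ ⊆ Z)
    (hZ : ∀ u v : V, G.Adj u v → u ∈ Z ∨ v ∈ Z)
    (hZ₀ind : ∀ a ∈ Z \ Z₁, ∀ b ∈ Z \ Z₁, ¬ G.Adj a b)
    (V₁ : Set V) (hV₁ : V₁ = {w : V | w ∉ Z ∧ ∃ z ∈ Z \ Z₁, G.Adj w z})
    (hV₁Z₁ : ∀ w ∈ V₁, ∃ z ∈ Z₁, G.Adj w z) :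
    ∀ u v : V, G.Adj u v → u ∈ Z₁ ∪ V₁ ∨ v ∈ Z₁ ∪ V₁ := by
  intro u v huv
  by_cases hu1 : u ∈ Z₁
  · exact Or.inl (Or.inl hu1)
  by_cases hv1 : v ∈ Z₁
  · exact Or.inr (Or.inl hv1)
  rcases hZ u v huv with hu | hv
  · right; right
    rw [hV₁]
    refine ⟨fun hvZ => hZ₀ind u ⟨hu, hu1⟩ v ⟨hvZ, hv1⟩ huv, u, ⟨hu, hu1⟩, huv.symm⟩
  · left; right
    rw [hV₁]
    refine ⟨fun huZ => hZ₀ind u ⟨huZ, hu1⟩ v ⟨hv, hv1⟩ huv, v, ⟨hv, hv1⟩, huv⟩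
end

section
/- Let G be a finite graph with vertex set V, and let f : S → {ii, io, o}^V where S is the set of pairs (V₁, C) with V₁ a vertex cover and C ⊆ cc(G[V₁]). Fix a spanning tree T of G rooted at r. Then the map φ' sending (V₁,C) to the pair consisting of the {ii,io,o}-label of r together with a function V \ {r} → {a,b} (defined top-down: if the parent p of v is in V₁ then label v by 'a' iff v ∈ V₁; if p ∉ V₁ then v ∈ V₁ and label v by 'a' iff the component of v belongs to C) is injective. Consequently |S| ≤ 3 · 2^{|V|−1}. -/
open Classical

/-- The three labels `ii`, `io`, `o` used for the root. -/
inductive Lab : Type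
  | ii : Lab
  | io : Lab
  | o : Lab

/-- The two labels `a`, `b` used for the non-root vertices. -/
inductive AB : Type
  | a : AB
  | b : AB

def labEquiv : Lab ≃ Fin 3 where
  toFun x := match x with | .ii => 0 | .io => 1 | .o => 2
  invFun n := match n with | 0 => .ii | 1 => .io | _ => .o
  left_inv x := by cases x <;> rfl
  right_inv n := by fin_cases n <;> rfl

def abEquiv : AB ≃ Fin 2 where
  toFun x := match x with | .a => 0 | .b => 1
  invFun n := match n with | 0 => .a | _ => .b
  left_inv x := by cases x <;> rfl
  right_inv n := by fin_cases n <;> rfl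

instance : Finite Lab := Finite.of_equiv _ labEquiv.symm
instance : Finite AB := Finite.of_equiv _ abEquiv.symm

/-- The refined map `φ'`: fix a spanning tree of the connected graph `G` given by a
parent function `p` with root `r`. A pair `(V₁, C)` (vertex cover plus a set of
components of `G[V₁]`) is sent to the `{ii,io,o}`-label of the root together with an
`{a,b}`-labelling of `V \ {r}` defined top-down as in the paper. This map is injective;
consequently the number of pairs `(V₁, C)` is at most `3 · 2 ^ (|V| - 1)`. -/
theorem stmt16 {V : Type*} [Fintype V] (G : SimpleGraph V) (hG : G.Connected)
    (p : V → V) (r : V) (hr : p r = r)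
    (htree : ∀ w : V, w ≠ r → G.Adj w (p w))
    (hreach : ∀ w : V, Relation.ReflTransGen (fun a b => b = p a) w r) :
    (∀ (V₁ V₁' : Set V)
      (_ : ∀ u v : V, G.Adj u v → u ∈ V₁ ∨ v ∈ V₁)
      (_ : ∀ u v : V, G.Adj u v → u ∈ V₁' ∨ v ∈ V₁')
      (C : Set (G.induce V₁).ConnectedComponent)
      (C' : Set (G.induce V₁').ConnectedComponent),
      -- the labels of the root agree
      (if h : r ∈ V₁ then
          (if (G.induce V₁).connectedComponentMk ⟨r, h⟩ ∈ C then Lab.ii else Lab.io)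
        else Lab.o)
        = (if h : r ∈ V₁' then
          (if (G.induce V₁').connectedComponentMk ⟨r, h⟩ ∈ C' then Lab.ii else Lab.io)
        else Lab.o) →
      -- the `{a,b}`-labellings of the non-root vertices agree
      (fun v : {v : V // v ≠ r} =>
          if p v.1 ∈ V₁ then (if v.1 ∈ V₁ then AB.a else AB.b)
          else if h : v.1 ∈ V₁ then
            (if (G.induce V₁).connectedComponentMk ⟨v.1, h⟩ ∈ C then AB.a else AB.b)
          else AB.b)
        = (fun v : {v : V // v ≠ r} =>
          if p v.1 ∈ V₁' then (if v.1 ∈ V₁' then AB.a else AB.b)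
          else if h : v.1 ∈ V₁' then
            (if (G.induce V₁').connectedComponentMk ⟨v.1, h⟩ ∈ C' then AB.a else AB.b)
          else AB.b) →
      V₁ = V₁' ∧ HEq C C') ∧
    Nat.card (Σ V₁ : {S : Set V // ∀ u v : V, G.Adj u v → u ∈ S ∨ v ∈ S},
        Set (G.induce (V₁ : Set V)).ConnectedComponent)
      ≤ 3 * 2 ^ (Fintype.card V - 1) := by
  have part1 : (∀ (V₁ V₁' : Set V)
      (_ : ∀ u v : V, G.Adj u v → u ∈ V₁ ∨ v ∈ V₁)
      (_ : ∀ u v : V, G.Adj u v → u ∈ V₁' ∨ v ∈ V₁')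
      (C : Set (G.induce V₁).ConnectedComponent)
      (C' : Set (G.induce V₁').ConnectedComponent),
      (if h : r ∈ V₁ then
          (if (G.induce V₁).connectedComponentMk ⟨r, h⟩ ∈ C then Lab.ii else Lab.io)
        else Lab.o)
        = (if h : r ∈ V₁' then
          (if (G.induce V₁').connectedComponentMk ⟨r, h⟩ ∈ C' then Lab.ii else Lab.io)
        else Lab.o) →
      (fun v : {v : V // v ≠ r} =>
          if p v.1 ∈ V₁ then (if v.1 ∈ V₁ then AB.a else AB.b)
          else if h : v.1 ∈ V₁ then
            (if (G.induce V₁).connectedComponentMk ⟨v.1, h⟩ ∈ C then AB.a else AB.b)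
          else AB.b)
        = (fun v : {v : V // v ≠ r} =>
          if p v.1 ∈ V₁' then (if v.1 ∈ V₁' then AB.a else AB.b)
          else if h : v.1 ∈ V₁' then
            (if (G.induce V₁').connectedComponentMk ⟨v.1, h⟩ ∈ C' then AB.a else AB.b)
          else AB.b) →
      V₁ = V₁' ∧ HEq C C') := by
    intro V₁ V₁' hc hc' C C' hroot hfun
    -- the root memberships agree
    have hrmem : r ∈ V₁ ↔ r ∈ V₁' := by
      by_cases h1 : r ∈ V₁ <;> by_cases h2 : r ∈ V₁'
      · exact iff_of_true h1 h2
      · rw [dif_pos h1, dif_neg h2] at hroot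
        split at hroot <;> exact Lab.noConfusion hroot
      · rw [dif_neg h1, dif_pos h2] at hroot
        split at hroot <;> exact Lab.noConfusion hroot
      · exact iff_of_false h1 h2
    -- all memberships agree
    have key : ∀ w : V, (w ∈ V₁ ↔ w ∈ V₁') := by
      intro w
      induction hreach w using Relation.ReflTransGen.head_induction_on with
      | refl => exact hrmem
      | head hac hcr IH =>
        rename_i a c
        subst hac
        by_cases har : a = r
        · subst har; exact hrmem
        · have heq := congrFun hfun ⟨a, har⟩
          simp only at heq
          by_cases hp : p a ∈ V₁
          · have hp' : p a ∈ V₁' := IH.mp hp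
            by_cases h1 : a ∈ V₁ <;> by_cases h2 : a ∈ V₁'
            · exact iff_of_true h1 h2
            · rw [if_pos hp, if_pos hp', if_pos h1, if_neg h2] at heq
              exact AB.noConfusion heq
            · rw [if_pos hp, if_pos hp', if_neg h1, if_pos h2] at heq
              exact AB.noConfusion heq
            · exact iff_of_false h1 h2
          · have hp' : p a ∉ V₁' := fun h => hp (IH.mpr h)
            have h1 : a ∈ V₁ := (hc a (p a) (htree a har)).resolve_right hp
            have h2 : a ∈ V₁' := (hc' a (p a) (htree a har)).resolve_right hp'
            exact iff_of_true h1 h2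
    obtain rfl : V₁ = V₁' := Set.ext key
    refine ⟨rfl, heq_of_eq ?_⟩
    -- now show `C = C'`
    have hrootC : ∀ h : r ∈ V₁,
        ((G.induce V₁).connectedComponentMk ⟨r, h⟩ ∈ C ↔
          (G.induce V₁).connectedComponentMk ⟨r, h⟩ ∈ C') := by
      intro h
      rw [dif_pos h, dif_pos h] at hroot
      by_cases m1 : (G.induce V₁).connectedComponentMk ⟨r, h⟩ ∈ C <;>
        by_cases m2 : (G.induce V₁).connectedComponentMk ⟨r, h⟩ ∈ C'
      · exact iff_of_true m1 m2
      · rw [if_pos m1, if_neg m2] at hroot; exact Lab.noConfusion hroot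
      · rw [if_neg m1, if_pos m2] at hroot; exact Lab.noConfusion hroot
      · exact iff_of_false m1 m2
    have compClaim : ∀ w : V, ∀ hw : w ∈ V₁,
        ((G.induce V₁).connectedComponentMk ⟨w, hw⟩ ∈ C ↔
          (G.induce V₁).connectedComponentMk ⟨w, hw⟩ ∈ C') := by
      intro w
      induction hreach w using Relation.ReflTransGen.head_induction_on with
      | refl => exact hrootC
      | head hac hcr IH =>
        rename_i a c
        subst hac
        intro hw
        by_cases har : a = r
        · subst har; exact hrootC hw
        · have heq := congrFun hfun ⟨a, har⟩
          simp only at heq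
          by_cases hp : p a ∈ V₁
          · have hadj : (G.induce V₁).Adj ⟨a, hw⟩ ⟨p a, hp⟩ := htree a har
            have hcc : (G.induce V₁).connectedComponentMk ⟨a, hw⟩
                = (G.induce V₁).connectedComponentMk ⟨p a, hp⟩ :=
              SimpleGraph.ConnectedComponent.sound hadj.reachable
            rw [hcc]
            exact IH hp
          · rw [if_neg hp, if_neg hp, dif_pos hw, dif_pos hw] at heq
            by_cases m1 : (G.induce V₁).connectedComponentMk ⟨a, hw⟩ ∈ C <;>
              by_cases m2 : (G.induce V₁).connectedComponentMk ⟨a, hw⟩ ∈ C'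
            · exact iff_of_true m1 m2
            · rw [if_pos m1, if_neg m2] at heq; exact AB.noConfusion heq
            · rw [if_neg m1, if_pos m2] at heq; exact AB.noConfusion heq
            · exact iff_of_false m1 m2
    refine Set.ext fun K => ?_
    induction K using SimpleGraph.ConnectedComponent.ind with
    | _ v => exact compClaim v.1 v.2
  refine ⟨part1, ?_⟩
  -- the counting consequence
  set F : (Σ V₁ : {S : Set V // ∀ u v : V, G.Adj u v → u ∈ S ∨ v ∈ S},
        Set (G.induce (V₁ : Set V)).ConnectedComponent) →
      Lab × ({v : V // v ≠ r} → AB) := fun x =>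
    ((if h : r ∈ (x.1 : Set V) then
        (if (G.induce (x.1 : Set V)).connectedComponentMk ⟨r, h⟩ ∈ x.2 then Lab.ii else Lab.io)
      else Lab.o),
     fun v : {v : V // v ≠ r} =>
        if p v.1 ∈ (x.1 : Set V) then (if v.1 ∈ (x.1 : Set V) then AB.a else AB.b)
        else if h : v.1 ∈ (x.1 : Set V) then
          (if (G.induce (x.1 : Set V)).connectedComponentMk ⟨v.1, h⟩ ∈ x.2 then AB.a else AB.b)
        else AB.b) with hFdef
  have hinj : Function.Injective F := by
    rintro ⟨⟨V₁, h1⟩, C⟩ ⟨⟨V₁', h1'⟩, C'⟩ h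
    obtain ⟨hV, hC⟩ := part1 V₁ V₁' h1 h1' C C'
      (congrArg Prod.fst h) (congrArg Prod.snd h)
    subst hV
    obtain rfl : C = C' := eq_of_heq hC
    rfl
  calc Nat.card (Σ V₁ : {S : Set V // ∀ u v : V, G.Adj u v → u ∈ S ∨ v ∈ S},
        Set (G.induce (V₁ : Set V)).ConnectedComponent)
      ≤ Nat.card (Lab × ({v : V // v ≠ r} → AB)) := Nat.card_le_card_of_injective F hinj
    _ = 3 * 2 ^ (Fintype.card V - 1) := by
        rw [Nat.card_prod, Nat.card_fun, Nat.card_eq_of_equiv_fin labEquiv,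
          Nat.card_eq_of_equiv_fin abEquiv, Nat.card_eq_fintype_card]
        have hcard : Fintype.card { v : V // v ≠ r } = Fintype.card V - 1 := by
          have h := Fintype.card_subtype_compl (fun v : V => v = r)
          rw [Fintype.card_subtype_eq] at h
          exact (Fintype.card_congr (Equiv.refl _)).trans h
        rw [hcard]
end

section
/- Let G be a graph, X a connected vertex cover of the graph G/e obtained by contracting edge e = uv of G to a vertex x. Then (X \ {x}) ∪ {u, v} is a connected vertex cover of G of size at most |X| + 2, provided u or v has a neighbor in (X \ {x}) ∪ {u,v} or G has at most 2 vertices. -/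
/-- The graph obtained from `G` by contracting the edge `uv`: the vertex `v` is removed
and the merged vertex `x` (represented by `u`) takes over all neighbours of `v`. -/
def contractEdge {V : Type*} (G : SimpleGraph V) (u v : V) :
    SimpleGraph {w : V // w ≠ v} :=
  SimpleGraph.fromRel (fun a b =>
    G.Adj a.1 b.1 ∨ (a.1 = u ∧ G.Adj v b.1) ∨ (b.1 = u ∧ G.Adj a.1 v))

/-- If `X` is a connected vertex cover of the contracted graph `G/e` (with `e = uv`
contracted onto the vertex `x` represented by `u`), then `(X \ {x}) ∪ {u, v}` is a
connected vertex cover of `G` of size at most `|X| + 2`, provided `u` or `v` has a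
neighbour in `(X \ {x}) ∪ {u, v}` or `G` has at most two vertices. -/
theorem stmt19 {V : Type*} [Fintype V] (G : SimpleGraph V) (hG : G.Connected)
    (u v : V) (huv : G.Adj u v)
    (X : Set {w : V // w ≠ v})
    (hXvc : ∀ a b : {w : V // w ≠ v}, (contractEdge G u v).Adj a b → a ∈ X ∨ b ∈ X)
    (hXconn : ((contractEdge G u v).induce X).Connected)
    (S : Set V) (hS : S = ((Subtype.val '' X) \ {u}) ∪ {u, v})
    (hprov : (∃ w ∈ S, G.Adj u w ∨ G.Adj v w) ∨ Fintype.card V ≤ 2) :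
    (∀ a b : V, G.Adj a b → a ∈ S ∨ b ∈ S) ∧
    (G.induce S).Connected ∧ S.ncard ≤ X.ncard + 2 := by
  have hune : u ≠ v := huv.ne
  have huS : u ∈ S := by rw [hS]; right; left; rfl
  have hvS : v ∈ S := by rw [hS]; right; right; rfl
  have mS : ∀ a : {w : V // w ≠ v}, a ∈ X → a.1 ∈ S := by
    intro a ha
    by_cases h : a.1 = u
    · rw [hS, h]; right; left; rfl
    · rw [hS]; left; exact ⟨⟨a, ha, rfl⟩, h⟩
  -- Part 1 : vertex cover
  have cover : ∀ a b : V, G.Adj a b → a ∈ S ∨ b ∈ S := by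
    intro a b hab
    by_cases hav : a = v
    · left; rw [hav]; exact hvS
    by_cases hbv : b = v
    · right; rw [hbv]; exact hvS
    have hadj : (contractEdge G u v).Adj ⟨a, hav⟩ ⟨b, hbv⟩ := by
      rw [contractEdge, SimpleGraph.fromRel_adj]
      exact ⟨by simpa using hab.ne, Or.inl (Or.inl hab)⟩
    rcases hXvc _ _ hadj with h | h
    · left; exact mS _ h
    · right; exact mS _ h
  refine ⟨cover, ?_, ?_⟩
  -- Part 2 : connectivity
  · -- map walks in the contracted induced graph to reachability in `G.induce S`
    have claimA : ∀ a b : X, (G.induce S).Reachable ⟨a.1.1, mS a.1 a.2⟩ ⟨b.1.1, mS b.1 b.2⟩ := by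
      intro a b
      obtain ⟨p⟩ := (hXconn.preconnected a b)
      induction p with
      | nil => exact SimpleGraph.Reachable.refl _
      | cons h p ih =>
        rename_i c d _
        refine SimpleGraph.Reachable.trans ?_ ih
        have h' : (contractEdge G u v).Adj c.1 d.1 := h
        rw [contractEdge, SimpleGraph.fromRel_adj] at h'
        obtain ⟨hne, hrel⟩ := h'
        have key : G.Adj c.1.1 d.1.1 ∨ (c.1.1 = u ∧ G.Adj v d.1.1) ∨ (d.1.1 = u ∧ G.Adj c.1.1 v) := by
          rcases hrel with (h1 | ⟨h1, h2⟩ | ⟨h1, h2⟩) | (h1 | ⟨h1, h2⟩ | ⟨h1, h2⟩)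
          · exact Or.inl h1
          · exact Or.inr (Or.inl ⟨h1, h2⟩)
          · exact Or.inr (Or.inr ⟨h1, h2⟩)
          · exact Or.inl h1.symm
          · exact Or.inr (Or.inr ⟨h1, h2.symm⟩)
          · exact Or.inr (Or.inl ⟨h1, h2.symm⟩)
        rcases key with h1 | ⟨h1, h2⟩ | ⟨h1, h2⟩
        · exact SimpleGraph.Adj.reachable (by simpa using h1)
        · refine SimpleGraph.Reachable.trans
            (SimpleGraph.Adj.reachable (v := (⟨v, hvS⟩ : S)) ?_)
            (SimpleGraph.Adj.reachable ?_)
          · simp only [SimpleGraph.comap_adj, Function.Embedding.coe_subtype]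
            rw [h1]; exact huv
          · simpa using h2
        · refine SimpleGraph.Reachable.trans
            (SimpleGraph.Adj.reachable (v := (⟨v, hvS⟩ : S)) ?_)
            (SimpleGraph.Adj.reachable ?_)
          · simpa using h2
          · simp only [SimpleGraph.comap_adj, Function.Embedding.coe_subtype]
            rw [h1]; exact huv.symm
    have toV : ∀ s : S, (G.induce S).Reachable s ⟨v, hvS⟩ := by
      rintro ⟨w, hw⟩
      rw [hS] at hw
      rcases hw with ⟨⟨a, haX, rfl⟩, hwu⟩ | hw
      · -- w = a.1 with a ∈ X, a.1 ≠ u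
        have hwu : a.1 ≠ u := hwu
        by_cases hx : (⟨u, hune⟩ : {w : V // w ≠ v}) ∈ X
        · refine (claimA ⟨a, haX⟩ ⟨⟨u, hune⟩, hx⟩).trans (SimpleGraph.Adj.reachable ?_)
          simpa using huv
        · -- u's class not in X : all other neighbours of u and v are in X
          have hvnb : ∀ t (ht : t ≠ v), G.Adj v t → t ≠ u → (⟨t, ht⟩ : {w : V // w ≠ v}) ∈ X := by
            intro t ht hadj htu
            have : (contractEdge G u v).Adj ⟨u, hune⟩ ⟨t, ht⟩ := by
              rw [contractEdge, SimpleGraph.fromRel_adj]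
              exact ⟨by simpa using (Ne.symm htu), Or.inl (Or.inr (Or.inl ⟨rfl, hadj⟩))⟩
            rcases hXvc _ _ this with h | h
            · exact absurd h hx
            · exact h
          have hunb : ∀ t (ht : t ≠ v), G.Adj u t → (⟨t, ht⟩ : {w : V // w ≠ v}) ∈ X := by
            intro t ht hadj
            have : (contractEdge G u v).Adj ⟨u, hune⟩ ⟨t, ht⟩ := by
              rw [contractEdge, SimpleGraph.fromRel_adj]
              exact ⟨by simpa using hadj.ne, Or.inl (Or.inl hadj)⟩
            rcases hXvc _ _ this with h | h
            · exact absurd h hx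
            · exact h
          by_cases h1 : ∃ t, G.Adj v t ∧ t ≠ u
          · obtain ⟨t, hadj, htu⟩ := h1
            have htv : t ≠ v := hadj.ne'
            have htX := hvnb t htv hadj htu
            refine (claimA ⟨a, haX⟩ ⟨⟨t, htv⟩, htX⟩).trans (SimpleGraph.Adj.reachable ?_)
            simpa using hadj.symm
          · by_cases h2 : ∃ t, G.Adj u t ∧ t ≠ v
            · obtain ⟨t, hadj, htv⟩ := h2
              have htX := hunb t htv hadj
              refine (claimA ⟨a, haX⟩ ⟨⟨t, htv⟩, htX⟩).trans ?_
              refine (SimpleGraph.Adj.reachable (v := (⟨u, huS⟩ : S)) ?_).trans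
                (SimpleGraph.Adj.reachable ?_)
              · simpa using hadj.symm
              · simpa using huv
            · -- degenerate : V = {u, v}, contradiction with a.1 ∉ {u, v}
              exfalso
              push_neg at h1 h2
              have deg : ∀ (z z' : V), G.Walk z z' → (z' = u ∨ z' = v) → z = u ∨ z = v := by
                intro z z' p
                induction p with
                | nil => exact id
                | cons h p ih =>
                  intro hb
                  rcases ih hb with rfl | rfl
                  · right; exact h2 _ h.symm
                  · left; exact h1 _ h.symm
              obtain ⟨p⟩ := hG.preconnected a.1 u
              rcases deg a.1 u p (Or.inl rfl) with h | h
              · exact hwu h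
              · exact a.2 h
      · rcases hw with rfl | hw
        · exact SimpleGraph.Adj.reachable (by simpa using huv)
        · have : w = v := hw
          subst this
          exact SimpleGraph.Reachable.refl _
    rw [SimpleGraph.connected_iff]
    exact ⟨fun s t => (toV s).trans (toV t).symm, ⟨⟨u, huS⟩⟩⟩
  -- Part 3 : cardinality
  · have h1 : S ⊆ (Subtype.val '' X) ∪ {u, v} := by
      rw [hS]
      exact Set.union_subset_union_left _ Set.diff_subset
    calc S.ncard ≤ ((Subtype.val '' X) ∪ {u, v}).ncard :=
          Set.ncard_le_ncard h1 (Set.toFinite _)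
      _ ≤ (Subtype.val '' X).ncard + ({u, v} : Set V).ncard := Set.ncard_union_le _ _
      _ ≤ X.ncard + 2 := by
          refine Nat.add_le_add (le_of_eq ?_) ?_
          · exact Set.ncard_image_of_injective X Subtype.val_injective
          · calc ({u, v} : Set V).ncard ≤ ({v} : Set V).ncard + 1 := Set.ncard_insert_le _ _
              _ ≤ 2 := by simp
end
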